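/- arXiv:1604.07846 — 4 statements merged into one kernel-verified Lean document; each statement's English description precedes it below -/
import Mathlib

section
/- For all real α, β and all n ≥ 1, the derivative of the extended Jacobi polynomial satisfies d/dt J_n^{α,β}(t) = (1/2) J_{n-1}^{α+1,β+1}(t). -/
open Finset MeasureTheory

/-- Pochhammer symbol `(a)_m` (rising factorial). -/
noncomputable def poch (a : ℝ) (m : ℕ) : ℝ := (ascPochhammer ℝ m).eval a

/-- Extended Jacobi polynomial `J_n^{α,β}(t)`.  Terms with vanishing denominator
(which are exactly the terms with index below `ι₀`) are `0` by the division
convention, so this agrees with the paper's definition. -/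
noncomputable def J (α β : ℝ) (n : ℕ) (t : ℝ) : ℝ :=
  ∑ k ∈ Finset.range (n + 1),
    poch ((k : ℝ) + α + 1) (n - k) /
      (((n - k).factorial : ℝ) * (k.factorial : ℝ) *
        poch ((n : ℝ) + α + β + (k : ℝ) + 1) (n - k)) *
      ((t - 1) / 2) ^ k

/-- Classical Jacobi polynomial `P_n^{(α,β)}(t)`. -/
noncomputable def P (α β : ℝ) (n : ℕ) (t : ℝ) : ℝ :=
  ∑ k ∈ Finset.range (n + 1),
    poch ((k : ℝ) + α + 1) (n - k) * poch ((n : ℝ) + α + β + 1) k /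
      (((n - k).factorial : ℝ) * (k.factorial : ℝ)) * ((t - 1) / 2) ^ k

theorem stmt1 (α β : ℝ) (n : ℕ) (hn : 1 ≤ n) (t : ℝ) :
    deriv (J α β n) t = (1 / 2) * J (α + 1) (β + 1) (n - 1) t := by
  set c : ℕ → ℝ := fun k =>
    poch ((k : ℝ) + α + 1) (n - k) /
      (((n - k).factorial : ℝ) * (k.factorial : ℝ) *
        poch ((n : ℝ) + α + β + (k : ℝ) + 1) (n - k)) with hc
  have hJ : J α β n = fun t => ∑ k ∈ Finset.range (n + 1), c k * ((t - 1) / 2) ^ k := rfl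
  have hd : HasDerivAt (J α β n)
      (∑ k ∈ Finset.range (n + 1), c k * ((k : ℝ) * ((t - 1) / 2) ^ (k - 1) * (1 / 2))) t := by
    rw [hJ]
    apply HasDerivAt.fun_sum
    intro k _
    have h1 : HasDerivAt (fun t : ℝ => (t - 1) / 2) (1 / 2) t := by
      simpa using ((hasDerivAt_id t).sub_const 1).div_const 2
    simpa [mul_comm, mul_assoc, mul_left_comm] using ((h1.pow k).const_mul (c k))
  rw [hd.deriv]
  rw [Finset.sum_range_succ']
  simp only [Nat.cast_zero, zero_mul, mul_zero, add_zero]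
  rw [J]
  rw [Nat.sub_add_cancel hn, Finset.mul_sum]
  apply Finset.sum_congr rfl
  intro j hj
  rw [Finset.mem_range] at hj
  have hsub : n - (j + 1) = n - 1 - j := by omega
  have hcast : ((n - 1 : ℕ) : ℝ) = (n : ℝ) - 1 := by
    have : (1:ℕ) ≤ n := hn
    push_cast [this]; ring
  have harg1 : ((j : ℝ) + 1) + α + 1 = (j : ℝ) + (α + 1) + 1 := by ring
  have harg2 : (n : ℝ) + α + β + ((j : ℝ) + 1) + 1
      = ((n - 1 : ℕ) : ℝ) + (α + 1) + (β + 1) + (j : ℝ) + 1 := by rw [hcast]; ring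
  rw [hc]
  simp only [Nat.cast_add, Nat.cast_one, hsub, harg1, harg2, Nat.factorial_succ]
  push_cast
  have hj1 : ((j : ℝ) + 1) ≠ 0 := by positivity
  set A := poch ((j : ℝ) + (α + 1) + 1) (n - 1 - j)
  set B := poch (((n - 1 : ℕ) : ℝ) + (α + 1) + (β + 1) + (j : ℝ) + 1) (n - 1 - j)
  rw [show (((n - 1 - j).factorial : ℝ)) * (((j:ℝ) + 1) * (j.factorial : ℝ)) * B
      = (((n - 1 - j).factorial : ℝ) * (j.factorial : ℝ) * B) * ((j:ℝ) + 1) by ring]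
  rw [div_mul_eq_mul_div, div_mul_eq_mul_div,
    show A * (((j:ℝ) + 1) * ((t - 1) / 2) ^ j * (1 / 2))
      = (A * ((t - 1) / 2) ^ j * (1 / 2)) * ((j:ℝ) + 1) by ring,
    mul_div_mul_right _ _ hj1]
  ring
end

section
/- For real α, nonnegative integer m, and n ≥ m + max{0, ⌊-α⌋}, the extended Jacobi polynomial satisfies J_n^{α,-m}(t) = ((n-m)! / (2^m n!)) · (1+t)^m · J_{n-m}^{α,m}(t). -/
open Finset MeasureTheory

lemma poch_zero (a : ℝ) : poch a 0 = 1 := by simp [poch]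

lemma poch_succ (a : ℝ) (n : ℕ) : poch a (n+1) = poch a n * (a + n) :=
  ascPochhammer_succ_eval n a

lemma poch_succ_left (a : ℝ) (n : ℕ) : poch a (n+1) = a * poch (a+1) n := by
  unfold poch
  rw [ascPochhammer_succ_left, Polynomial.X_mul, Polynomial.eval_mul_X, Polynomial.eval_comp]
  simp [mul_comm]

lemma poch_mul (a : ℝ) (n m : ℕ) : poch a n * poch (a + n) m = poch a (n + m) := by
  unfold poch
  rw [← ascPochhammer_mul]
  simp [Polynomial.eval_comp]

lemma poch_pos {a : ℝ} (ha : 0 < a) (n : ℕ) : 0 < poch a n := ascPochhammer_pos n a ha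

lemma poch_pascal (y : ℝ) (N : ℕ) :
    poch (y+1) (N+1) = poch y (N+1) + (N+1) * poch (y+1) N := by
  rw [poch_succ, poch_succ_left]
  push_cast
  ring

/-- generic jacReindexing lemma -/
lemma jacReindex {M : Type*} [AddCommMonoid M] (F : ℕ → M) (m : ℕ)
    (hF : ∀ u, m < u → F u = 0) (j n : ℕ) (hjm : j + m ≤ n) :
    ∑ k ∈ range (n+1), (if j ≤ k then F (k-j) else 0) = ∑ i ∈ range (m+1), F i := by
  rw [range_eq_Ico, ← Finset.sum_Ico_consecutive _ (Nat.zero_le j) (by omega : j ≤ n+1)]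
  have h1 : ∑ k ∈ Ico 0 j, (if j ≤ k then F (k-j) else 0) = 0 := by
    apply Finset.sum_eq_zero
    intro k hk
    rw [mem_Ico] at hk
    rw [if_neg (by omega)]
  rw [h1, zero_add, Finset.sum_Ico_eq_sum_range]
  have h2 : ∀ i ∈ range (n+1-j), (if j ≤ j + i then F (j+i-j) else 0) = F i := by
    intro i _
    rw [if_pos (Nat.le_add_right _ _), Nat.add_sub_cancel_left]
  rw [Finset.sum_congr rfl h2]
  symm
  have hsub : range (m+1) ⊆ range (n+1-j) := by
    intro u hu; simp only [mem_Ico, mem_range] at hu ⊢; omega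
  refine Finset.sum_subset hsub fun u hu hu' => hF u ?_
  simp only [mem_Ico, mem_range, not_and, not_lt] at hu hu'
  omega

lemma jacPascalSum (j N : ℕ) (A : ℕ → ℝ) :
    ∑ i ∈ range (N+2), ((j+1).choose i : ℝ) * A i
      = ∑ i ∈ range (N+2), (j.choose i : ℝ) * A i
        + ∑ i ∈ range (N+1), (j.choose i : ℝ) * A (i+1) := by
  rw [Finset.sum_range_succ' (fun i => ((j+1).choose i : ℝ) * A i) (N+1),
      Finset.sum_range_succ' (fun i => (j.choose i : ℝ) * A i) (N+1)]
  simp only [Nat.choose_succ_succ, Nat.choose_zero_right, Nat.cast_add, Nat.cast_one, add_mul,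
    Finset.sum_add_distrib, one_mul]
  ring

lemma jacL1 (j : ℕ) : ∀ (n : ℕ) (α : ℝ), poch (α + j + 1) n =
    ∑ i ∈ range (n+1), (j.choose i : ℝ) *
      (((n.factorial : ℝ) / ((n - i).factorial : ℝ)) * poch (α + i + 1) (n - i)) := by
  induction j with
  | zero =>
    intro n α
    rw [Finset.sum_eq_single 0]
    · have : (n.factorial : ℝ) ≠ 0 := Nat.cast_ne_zero.2 n.factorial_ne_zero
      simp [div_self this]
    · intro i _ hi
      match i, hi with
      | (i+1), _ => simp [Nat.choose]
    · intro h; exact absurd (mem_range.2 (Nat.succ_pos n)) h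
  | succ j IH =>
    intro n α
    match n with
    | 0 => simp [poch]
    | (N+1) =>
      push_cast
      rw [show α + ((j:ℝ) + 1) + 1 = (α + (j:ℝ) + 1) + 1 by ring, poch_pascal,
        show α + (j:ℝ) + 1 + 1 = (α+1) + (j:ℝ) + 1 by ring, IH (N+1) α, IH N (α+1)]
      rw [Finset.mul_sum]
      have h2 : ∀ i ∈ range (N+1),
          ((N:ℝ)+1) * ((j.choose i : ℝ) * (((N.factorial : ℝ) / ((N - i).factorial : ℝ)) *
            poch ((α+1) + i + 1) (N - i)))
          = (j.choose i : ℝ) * ((((N+1).factorial : ℝ) / (((N+1) - (i+1)).factorial : ℝ)) *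
            poch (α + (i+1) + 1) ((N+1) - (i+1))) := by
        intro i _
        rw [show (α+1) + (i:ℝ) + 1 = α + ((i:ℝ)+1) + 1 by ring,
          show (N+1) - (i+1) = N - i by omega, Nat.factorial_succ]
        push_cast
        ring
      rw [Finset.sum_congr rfl h2]
      have := jacPascalSum j N (fun i => (((N+1).factorial : ℝ) / (((N+1) - i).factorial : ℝ)) *
        poch (α + i + 1) ((N+1) - i))
      push_cast at this ⊢
      linarith [this]

lemma jacV (p q r i S : ℕ) (hS : i + p ≤ S) :
    ∑ j ∈ range (S+1), (if i ≤ j ∧ j ≤ i + r then p.choose (j-i) * q.choose (i+r-j) else 0)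
      = (p+q).choose r := by
  have hFz : ∀ u, p < u → (if u ≤ r then p.choose u * q.choose (r-u) else 0) = 0 := by
    intro u hu
    split
    · rw [Nat.choose_eq_zero_of_lt hu, zero_mul]
    · rfl
  have step1 : ∀ j, (if i ≤ j ∧ j ≤ i + r then p.choose (j-i) * q.choose (i+r-j) else 0)
      = (if i ≤ j then (if j - i ≤ r then p.choose (j-i) * q.choose (r-(j-i)) else 0) else 0) := by
    intro j
    by_cases h1 : i ≤ j
    · by_cases h2 : j ≤ i + r
      · rw [if_pos ⟨h1,h2⟩, if_pos h1, if_pos (by omega), show i+r-j = r - (j-i) by omega]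
      · rw [if_neg (by tauto), if_pos h1, if_neg (by omega)]
    · rw [if_neg (by tauto), if_neg h1]
  rw [Finset.sum_congr rfl (fun j _ => step1 j),
      jacReindex (fun u => if u ≤ r then p.choose u * q.choose (r-u) else 0) p hFz i S hS,
      Nat.add_choose_eq, Finset.Nat.sum_antidiagonal_eq_sum_range_succ_mk]
  have hs1 : range (p+1) ⊆ range (max p r + 1) :=
    Finset.range_subset_range.2 (Nat.succ_le_succ (Nat.le_max_left p r))
  have hs2 : range (r+1) ⊆ range (max p r + 1) :=
    Finset.range_subset_range.2 (Nat.succ_le_succ (Nat.le_max_right p r))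
  have e1 : ∑ u ∈ range (p+1), (if u ≤ r then p.choose u * q.choose (r-u) else 0)
      = ∑ u ∈ range (max p r + 1), (if u ≤ r then p.choose u * q.choose (r-u) else 0) := by
    refine Finset.sum_subset hs1 fun u hu hu' => ?_
    simp only [mem_range] at hu hu'
    exact hFz u (by omega)
  have e2 : ∑ u ∈ range (r+1), p.choose u * q.choose (r-u)
      = ∑ u ∈ range (max p r + 1), (if u ≤ r then p.choose u * q.choose (r-u) else 0) := by
    have c1 : ∀ u ∈ range (r+1), p.choose u * q.choose (r-u)
        = (if u ≤ r then p.choose u * q.choose (r-u) else 0) := by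
      intro u hu
      simp only [mem_range] at hu
      rw [if_pos (by omega)]
    rw [Finset.sum_congr rfl c1]
    refine Finset.sum_subset hs2 fun u hu hu' => ?_
    simp only [mem_range] at hu hu'
    rw [if_neg (by omega)]
  rw [e1, ← e2]

lemma jacW (m s k i : ℕ) :
    ∑ j ∈ range (s+1), (if j ≤ k then m.choose (k-j) * (s.choose j * j.choose i) else 0)
      = if i ≤ k then s.choose i * (s + m - i).choose (k-i) else 0 := by
  by_cases hik : i ≤ k
  · by_cases his : i ≤ s
    · have key : ∀ j ∈ range (s+1),
          (if j ≤ k then m.choose (k-j) * (s.choose j * j.choose i) else 0)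
          = s.choose i * (if i ≤ j ∧ j ≤ i + (k-i)
              then (s-i).choose (j-i) * m.choose (i+(k-i)-j) else 0) := by
        intro j hj
        rw [mem_range] at hj
        by_cases h1 : i ≤ j
        · by_cases h2 : j ≤ k
          · rw [if_pos h2, if_pos ⟨h1, by omega⟩,
              Nat.choose_mul (n := s) h1, show i+(k-i)-j = k - j by omega]
            ring
          · rw [if_neg h2, if_neg (by omega), mul_zero]
        · by_cases h2 : j ≤ k
          · rw [if_pos h2, if_neg (by tauto),
              Nat.choose_eq_zero_of_lt (show j < i by omega), mul_zero, mul_zero, mul_zero]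
          · rw [if_neg h2, if_neg (by tauto), mul_zero]
      rw [Finset.sum_congr rfl key, ← Finset.mul_sum, jacV (s-i) m (k-i) i s (by omega),
        if_pos hik, show s-i+m = s+m-i by omega]
    · rw [if_pos hik, Nat.choose_eq_zero_of_lt (by omega), zero_mul]
      apply Finset.sum_eq_zero
      intro j hj
      rw [mem_range] at hj
      split
      · rw [Nat.choose_eq_zero_of_lt (show j < i by omega), mul_zero, mul_zero]
      · rfl
  · rw [if_neg hik]
    apply Finset.sum_eq_zero
    intro j hj
    split
    · next h => rw [Nat.choose_eq_zero_of_lt (show j < i by omega), mul_zero, mul_zero]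
    · rfl

lemma jacStar (α : ℝ) (m s k : ℕ) (hk : k ≤ s + m) :
    ((s+m).choose k : ℝ) * poch (α + k + 1) (s+m-k) * poch (α + s + 1) k
      = ∑ j ∈ range (s+1), (if j ≤ k
          then ((m.choose (k-j) * s.choose j : ℕ) : ℝ) * poch (α + j + 1) (s+m) else 0) := by
  set n := s + m with hn
  set B : ℕ → ℝ := fun i => ((n.factorial : ℝ) / ((n - i).factorial : ℝ)) * poch (α + i + 1) (n - i)
    with hB
  have t1 : ∀ j ∈ range (s+1), (if j ≤ k
        then ((m.choose (k-j) * s.choose j : ℕ) : ℝ) * poch (α + j + 1) n else 0)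
      = ∑ i ∈ range (n+1), (if j ≤ k
        then ((m.choose (k-j) * (s.choose j * j.choose i) : ℕ) : ℝ) * B i else 0) := by
    intro j _
    by_cases hj : j ≤ k
    · simp only [if_pos hj]
      rw [jacL1 j n α, Finset.mul_sum]
      apply Finset.sum_congr rfl
      intro i _
      rw [hB]
      push_cast
      ring
    · simp only [if_neg hj, Finset.sum_const_zero]
  rw [Finset.sum_congr rfl t1, Finset.sum_comm]
  have t2 : ∀ i ∈ range (n+1),
      ∑ j ∈ range (s+1), (if j ≤ k
          then ((m.choose (k-j) * (s.choose j * j.choose i) : ℕ) : ℝ) * B i else 0)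
      = (if i ≤ k then ((s.choose i * (n - i).choose (k-i) : ℕ) : ℝ) else 0) * B i := by
    intro i _
    have e : ∀ j, (if j ≤ k
          then ((m.choose (k-j) * (s.choose j * j.choose i) : ℕ) : ℝ) * B i else 0)
        = ((if j ≤ k then (m.choose (k-j) * (s.choose j * j.choose i) : ℕ) else 0 : ℕ) : ℝ) * B i := by
      intro j
      by_cases hj : j ≤ k <;> simp [hj]
    rw [Finset.sum_congr rfl (fun j _ => e j), ← Finset.sum_mul, ← Nat.cast_sum, jacW m s k i]
    by_cases hik : i ≤ k <;> simp [hik, hn]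
  rw [Finset.sum_congr rfl t2]
  have t3 : ∑ i ∈ range (n+1), (if i ≤ k then ((s.choose i * (n - i).choose (k-i) : ℕ) : ℝ) else 0) * B i
      = ∑ i ∈ range (k+1), ((s.choose i * (n - i).choose (k-i) : ℕ) : ℝ) * B i := by
    symm
    have hsub : range (k+1) ⊆ range (n+1) := Finset.range_subset_range.2 (by omega)
    rw [Finset.sum_congr rfl (fun i hi => by
      rw [if_pos (by simp only [mem_range] at hi; omega)] :
        ∀ i ∈ range (k+1), ((s.choose i * (n - i).choose (k-i) : ℕ) : ℝ) * B i
          = (if i ≤ k then ((s.choose i * (n - i).choose (k-i) : ℕ) : ℝ) else 0) * B i)]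
    refine Finset.sum_subset hsub fun u hu hu' => ?_
    simp only [mem_range] at hu hu'
    rw [if_neg (by omega), zero_mul]
  rw [t3]
  have t4 : ∀ i ∈ range (k+1), ((s.choose i * (n - i).choose (k-i) : ℕ) : ℝ) * B i
      = ((n.choose k : ℝ) * poch (α + k + 1) (n-k)) *
        ((s.choose i : ℝ) * (((k.factorial : ℝ) / ((k - i).factorial : ℝ)) * poch (α + i + 1) (k - i))) := by
    intro i hi
    simp only [mem_range] at hi
    have hik : i ≤ k := by omega
    have hsplit : poch (α + i + 1) (k - i) * poch (α + k + 1) (n - k) = poch (α + i + 1) (n - i) := by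
      have := poch_mul (α + i + 1) (k - i) (n - k)
      rw [show (α + i + 1) + ((k - i : ℕ) : ℝ) = α + k + 1 by
          push_cast [Nat.cast_sub hik]; ring,
        show (k - i) + (n - k) = n - i by omega] at this
      exact this
    have f1 : (n-i).choose (k-i) * (k-i).factorial * (n-k).factorial = (n-i).factorial := by
      have := Nat.choose_mul_factorial_mul_factorial (show k - i ≤ n - i by omega)
      rwa [show n - i - (k - i) = n - k by omega] at this
    have f2 : n.choose k * k.factorial * (n-k).factorial = n.factorial :=
      Nat.choose_mul_factorial_mul_factorial hk
    have nat_eq : (n-i).choose (k-i) * n.factorial * (k-i).factorial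
        = n.choose k * k.factorial * (n-i).factorial := by
      rw [← f2, ← f1]; ring
    have req : ((n-i).choose (k-i) : ℝ) * (n.factorial : ℝ) * ((k-i).factorial : ℝ)
        = (n.choose k : ℝ) * (k.factorial : ℝ) * ((n-i).factorial : ℝ) := by
      exact_mod_cast congrArg (Nat.cast (R := ℝ)) nat_eq
    simp only [hB]
    rw [← hsplit]
    have hnz1 : ((n-i).factorial : ℝ) ≠ 0 := Nat.cast_ne_zero.2 (Nat.factorial_ne_zero _)
    have hnz2 : ((k-i).factorial : ℝ) ≠ 0 := Nat.cast_ne_zero.2 (Nat.factorial_ne_zero _)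
    push_cast
    field_simp
    linear_combination (poch (α + (i:ℝ) + 1) (k - i) * poch (α + (k:ℝ) + 1) (n - k) * (s.choose i : ℝ)) * req
  rw [Finset.sum_congr rfl t4, ← Finset.mul_sum, ← jacL1 s k α, hn]

theorem stmt2 (α : ℝ) (m n : ℕ) (hn : (m : ℤ) + max 0 ⌊-α⌋ ≤ (n : ℤ)) (t : ℝ) :
    J α (-(m : ℝ)) n t =
      ((n - m).factorial : ℝ) / (2 ^ m * (n.factorial : ℝ)) * (1 + t) ^ m *
        J α (m : ℝ) (n - m) t := by
  have hm : m ≤ n := by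
    have h0 : (0:ℤ) ≤ max 0 ⌊-α⌋ := le_max_left _ _
    exact_mod_cast (by linarith : (m:ℤ) ≤ n)
  set s := n - m with hs
  have hns : s + m = n := Nat.sub_add_cancel hm
  have hpos : 0 < α + s + 1 := by
    have h1 : (⌊-α⌋ : ℤ) ≤ (s : ℤ) := by
      have h2 : (⌊-α⌋ : ℤ) ≤ max 0 ⌊-α⌋ := le_max_right _ _
      have h3 : ((s:ℕ) : ℤ) = (n:ℤ) - m := by
        rw [← hns]; push_cast; ring
      omega
    have h2 : -α < (⌊-α⌋ : ℝ) + 1 := Int.lt_floor_add_one _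
    have h3 : ((⌊-α⌋ : ℤ) : ℝ) ≤ (s : ℝ) := by exact_mod_cast h1
    linarith
  set z : ℝ := (t - 1) / 2 with hz
  set D : ℝ := poch (α + s + 1) n with hD
  have hDpos : 0 < D := poch_pos hpos n
  have hcast : (s : ℝ) = (n : ℝ) - m := by
    rw [← hns]; push_cast; ring
  have hfac : ∀ r : ℕ, (0:ℝ) < (r.factorial : ℝ) := fun r => by
    exact_mod_cast r.factorial_pos
  have hPk : ∀ k : ℕ, 0 < poch ((α + s + 1) + k) (n - k) := fun k =>
    poch_pos (by have := Nat.cast_nonneg (α := ℝ) k; linarith) _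
  have hPmj : ∀ j : ℕ, 0 < poch ((α + s + 1) + (m+j : ℕ)) (s - j) := fun j =>
    poch_pos (by have := Nat.cast_nonneg (α := ℝ) (m+j); linarith) _
  have hDk : ∀ k, k ≤ n → poch (α + s + 1) k * poch ((α + s + 1) + k) (n - k) = D := by
    intro k hk
    rw [poch_mul, show k + (n - k) = n by omega]
  have hDj : ∀ j, j ≤ s → poch (α + s + 1) (m+j : ℕ) * poch ((α + s + 1) + (m+j : ℕ)) (s - j) = D := by
    intro j hj
    rw [poch_mul, show (m+j) + (s - j) = n by omega]
  have hNj : ∀ j, j ≤ s → poch (α + j + 1) (s - j) * poch (α + s + 1) (m+j : ℕ) = poch (α + j + 1) n := by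
    intro j hj
    have := poch_mul (α + j + 1) (s - j) (m + j)
    rwa [show (α + j + 1) + ((s - j : ℕ) : ℝ) = α + s + 1 by
        push_cast [Nat.cast_sub hj]; ring,
      show (s - j) + (m + j) = n by omega] at this
  -- coefficient functions
  set R : ℕ → ℝ := fun j => (s.choose j : ℝ) * poch (α + j + 1) n / ((s.factorial : ℝ) * D) with hR
  set NC : ℕ → ℝ := fun k =>
    (n.choose k : ℝ) * poch (α + k + 1) (n - k) * poch (α + s + 1) k / ((n.factorial : ℝ) * D)
    with hNC
  -- rewrite LHS
  have LHSeq : J α (-(m : ℝ)) n t = ∑ k ∈ range (n+1), NC k * z ^ k := by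
    unfold J
    apply Finset.sum_congr rfl
    intro k hk
    simp only [mem_range] at hk
    have hkn : k ≤ n := by omega
    congr 1
    rw [show ((k:ℝ) + α + 1) = α + k + 1 by ring,
      show ((n:ℝ) + α + -(m:ℝ) + k + 1) = (α + s + 1) + k by rw [hcast]; ring]
    simp only [hNC]
    rw [div_eq_div_iff
      (ne_of_gt (mul_pos (mul_pos (hfac _) (hfac _)) (hPk k)))
      (ne_of_gt (mul_pos (hfac n) hDpos))]
    rw [← hDk k hkn,
      show ((n.factorial : ℝ)) = (n.choose k : ℝ) * k.factorial * (n-k).factorial by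
        exact_mod_cast congrArg (Nat.cast (R := ℝ)) (Nat.choose_mul_factorial_mul_factorial hkn).symm]
    ring
  -- rewrite RHS inner sum
  have RHSeq : J α (m : ℝ) s t = ∑ j ∈ range (s+1), R j * z ^ j := by
    unfold J
    apply Finset.sum_congr rfl
    intro j hj
    simp only [mem_range] at hj
    have hjs : j ≤ s := by omega
    congr 1
    rw [show ((j:ℝ) + α + 1) = α + j + 1 by ring,
      show ((s:ℝ) + α + (m:ℝ) + j + 1) = (α + s + 1) + ((m + j : ℕ) : ℝ) by push_cast; ring]
    simp only [hR]
    rw [div_eq_div_iff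
      (ne_of_gt (mul_pos (mul_pos (hfac _) (hfac _)) (hPmj j)))
      (ne_of_gt (mul_pos (hfac s) hDpos))]
    rw [← hDj j hjs, ← hNj j hjs,
      show ((s.factorial : ℝ)) = (s.choose j : ℝ) * j.factorial * (s-j).factorial by
        exact_mod_cast congrArg (Nat.cast (R := ℝ)) (Nat.choose_mul_factorial_mul_factorial hjs).symm]
    ring
  rw [LHSeq, RHSeq]
  -- binomial expansion of (1+t)^m
  have hb : (1 + t) ^ m = 2 ^ m * ∑ i ∈ range (m+1), (m.choose i : ℝ) * z ^ i := by
    rw [show (1 + t) = 2 * (z + 1) by rw [hz]; ring, mul_pow, add_pow]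
    congr 1
    apply Finset.sum_congr rfl
    intro i _
    ring
  rw [hb]
  have h2m : (2:ℝ)^m ≠ 0 := by positivity
  rw [show ((s.factorial : ℝ) / (2 ^ m * (n.factorial : ℝ)) *
      (2 ^ m * ∑ i ∈ range (m+1), (m.choose i : ℝ) * z ^ i) * (∑ j ∈ range (s+1), R j * z ^ j))
      = ((s.factorial : ℝ) / (n.factorial : ℝ)) *
        ((∑ j ∈ range (s+1), R j * z ^ j) * (∑ i ∈ range (m+1), (m.choose i : ℝ) * z ^ i)) by
    field_simp]
  rw [Finset.sum_mul_sum]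
  -- jacReindex the double sum
  have R2 : ∀ j ∈ range (s+1),
      ∑ i ∈ range (m+1), (R j * z ^ j) * ((m.choose i : ℝ) * z ^ i)
        = ∑ k ∈ range (n+1), (if j ≤ k then R j * (m.choose (k-j) : ℝ) * z ^ k else 0) := by
    intro j hj
    simp only [mem_range] at hj
    have hjm : j + m ≤ n := by omega
    have e1 : ∀ i ∈ range (m+1), (R j * z ^ j) * ((m.choose i : ℝ) * z ^ i)
        = R j * (m.choose i : ℝ) * z ^ (j + i) := by
      intro i _
      rw [pow_add]
      ring
    rw [Finset.sum_congr rfl e1, ← jacReindex (fun u => R j * (m.choose u : ℝ) * z ^ (j + u)) m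
      (fun u hu => by simp [Nat.choose_eq_zero_of_lt hu]) j n hjm]
    apply Finset.sum_congr rfl
    intro k _
    by_cases hjk : j ≤ k
    · rw [if_pos hjk, if_pos hjk, show j + (k - j) = k by omega]
    · rw [if_neg hjk, if_neg hjk]
  rw [Finset.sum_congr rfl R2, Finset.sum_comm, Finset.mul_sum]
  apply Finset.sum_congr rfl
  intro k hk
  simp only [mem_range] at hk
  have hkn : k ≤ n := by omega
  have e2 : ∀ j ∈ range (s+1), (if j ≤ k then R j * (m.choose (k-j) : ℝ) * z ^ k else 0)
      = (if j ≤ k then R j * (m.choose (k-j) : ℝ) else 0) * z ^ k := by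
    intro j _
    by_cases hjk : j ≤ k <;> simp [hjk]
  rw [Finset.sum_congr rfl e2, ← Finset.sum_mul]
  rw [show ((s.factorial:ℝ)/(n.factorial:ℝ)) *
      ((∑ j ∈ range (s+1), (if j ≤ k then R j * (m.choose (k-j):ℝ) else 0)) * z^k)
      = (((s.factorial:ℝ)/(n.factorial:ℝ)) *
        (∑ j ∈ range (s+1), (if j ≤ k then R j * (m.choose (k-j):ℝ) else 0))) * z^k by ring]
  congr 1
  have hstar := jacStar α m s k (by omega)
  rw [hns] at hstar
  have e3 : ∀ j ∈ range (s+1), (if j ≤ k then R j * (m.choose (k-j) : ℝ) else 0)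
      = (1/((s.factorial:ℝ) * D)) * (if j ≤ k
          then ((m.choose (k-j) * s.choose j : ℕ):ℝ) * poch (α + j + 1) n else 0) := by
    intro j _
    by_cases hjk : j ≤ k
    · rw [if_pos hjk, if_pos hjk]
      simp only [hR]
      push_cast
      ring
    · rw [if_neg hjk, if_neg hjk, mul_zero]
  rw [Finset.sum_congr rfl e3, ← Finset.mul_sum, ← hstar]
  simp only [hNC]
  have hfs := (hfac s).ne'
  have hfn := (hfac n).ne'
  have hDne := hDpos.ne'
  field_simp
end

section
/- For nonnegative integers ℓ, m and n ≥ m + ℓ, the extended Jacobi polynomial satisfies J_n^{-ℓ,-m}(t) = ((-1)^ℓ (n-m-ℓ)! / (2^{ℓ+m} n!)) · (1-t)^ℓ (1+t)^m · J_{n-ℓ-m}^{ℓ,m}(t). -/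
open Finset MeasureTheory

lemma poch_prod (a : ℝ) (k : ℕ) : poch a k = ∏ i ∈ Finset.range k, (a + i) := by
  induction k with
  | zero => simp [poch]
  | succ k ih =>
    rw [poch, ascPochhammer_succ_eval, ← poch, ih, Finset.prod_range_succ]

lemma poch_eq_zero {a : ℝ} {k j : ℕ} (hj : j < k) (ha : a + j = 0) : poch a k = 0 := by
  rw [poch_prod]
  exact Finset.prod_eq_zero (Finset.mem_range.2 hj) ha

lemma poch_eq (b k : ℕ) : poch ((b : ℝ) + 1) k = ((b + k).factorial : ℝ) / (b.factorial : ℝ) := by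
  rw [eq_div_iff (by exact_mod_cast b.factorial_ne_zero), mul_comm]
  exact factorial_mul_ascPochhammer ℝ b k

noncomputable def KP (N r M : ℕ) : Polynomial ℝ :=
  ∑ k ∈ Finset.range (M + 1),
    Polynomial.C ((((N + k).choose r * M.choose k : ℕ)) : ℝ) * Polynomial.X ^ k

noncomputable def JP (a b N : ℕ) : Polynomial ℝ :=
  ∑ j ∈ Finset.range (N + 1),
    Polynomial.C ((((a + j).choose (b + j) * N.choose j : ℕ)) : ℝ) * Polynomial.X ^ j

lemma KA (N r M : ℕ) : KP (N + 1) (r + 1) M = KP N r M + KP N (r + 1) M := by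
  unfold KP
  rw [← Finset.sum_add_distrib]
  refine Finset.sum_congr rfl fun k _ => ?_
  rw [show N + 1 + k = (N + k) + 1 by omega, Nat.choose_succ_succ]
  simp only [Nat.succ_eq_add_one, Nat.cast_mul, Nat.cast_add, map_add, map_mul]
  ring

lemma KB (N r M : ℕ) :
    KP N (r + 1) (M + 1) = Polynomial.X * KP (N + 1) (r + 1) M + KP N (r + 1) M := by
  have h1 : (∑ k ∈ Finset.range (M + 1),
      Polynomial.X * (Polynomial.C ((((N + 1 + k).choose (r+1) * M.choose k : ℕ)) : ℝ) * Polynomial.X ^ k))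
      = Polynomial.X * KP (N + 1) (r + 1) M := by
    rw [KP, Finset.mul_sum]
  have h2 : (∑ k ∈ Finset.range (M + 1),
      Polynomial.C ((((N + (k+1)).choose (r+1) * M.choose (k+1) : ℕ)) : ℝ) * Polynomial.X ^ (k+1))
      + Polynomial.C ((((N + 0).choose (r+1) * (M+1).choose 0 : ℕ)) : ℝ) * Polynomial.X ^ 0
      = KP N (r + 1) M := by
    rw [Finset.sum_range_succ
      (fun k => Polynomial.C ((((N + (k+1)).choose (r+1) * M.choose (k+1) : ℕ)) : ℝ) * Polynomial.X ^ (k+1)) M]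
    rw [KP, Finset.sum_range_succ'
      (fun k => Polynomial.C ((((N + k).choose (r+1) * M.choose k : ℕ)) : ℝ) * Polynomial.X ^ k) M]
    simp [Nat.choose_succ_self]
  have hsplit : ∀ k, (Polynomial.C ((((N + (k+1)).choose (r+1) * (M+1).choose (k+1) : ℕ)) : ℝ) * Polynomial.X ^ (k+1))
      = Polynomial.X * (Polynomial.C ((((N + 1 + k).choose (r+1) * M.choose k : ℕ)) : ℝ) * Polynomial.X ^ k)
        + Polynomial.C ((((N + (k+1)).choose (r+1) * M.choose (k+1) : ℕ)) : ℝ) * Polynomial.X ^ (k+1) := by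
    intro k
    rw [Nat.choose_succ_succ (M) k, show N + (k+1) = N + 1 + k by omega]
    simp only [Nat.succ_eq_add_one, Nat.cast_mul, Nat.cast_add, map_add, map_mul]
    ring
  calc KP N (r + 1) (M + 1)
      = (∑ k ∈ Finset.range (M + 1),
          Polynomial.C ((((N + (k+1)).choose (r+1) * (M+1).choose (k+1) : ℕ)) : ℝ) * Polynomial.X ^ (k+1))
        + Polynomial.C ((((N + 0).choose (r+1) * (M+1).choose 0 : ℕ)) : ℝ) * Polynomial.X ^ 0 := by
        rw [KP, Finset.sum_range_succ'
          (fun k => Polynomial.C ((((N + k).choose (r+1) * (M+1).choose k : ℕ)) : ℝ) * Polynomial.X ^ k) (M+1)]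
    _ = Polynomial.X * KP (N + 1) (r + 1) M + KP N (r + 1) M := by
        rw [Finset.sum_congr rfl fun k _ => hsplit k, Finset.sum_add_distrib]
        rw [h1, add_assoc, h2]

lemma Krec (N r M : ℕ) :
    (1 + Polynomial.X) * KP (N + 1) (r + 1) (M + 1) =
      KP N r (M + 1) + KP N (r + 1) (M + 2) := by
  linear_combination (KA N r (M + 1)) - (KB N r (M + 1))

lemma JA (a b N : ℕ) :
    JP a b (N + 1) = JP a b N + Polynomial.X * JP (a + 1) (b + 1) N := by
  have h1 : (∑ j ∈ Finset.range (N + 1),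
      Polynomial.X * (Polynomial.C ((((a + 1 + j).choose (b + 1 + j) * N.choose j : ℕ)) : ℝ) * Polynomial.X ^ j))
      = Polynomial.X * JP (a + 1) (b + 1) N := by
    rw [JP, Finset.mul_sum]
  have h2 : (∑ j ∈ Finset.range (N + 1),
      Polynomial.C ((((a + (j+1)).choose (b + (j+1)) * N.choose (j+1) : ℕ)) : ℝ) * Polynomial.X ^ (j+1))
      + Polynomial.C ((((a + 0).choose (b + 0) * (N+1).choose 0 : ℕ)) : ℝ) * Polynomial.X ^ 0
      = JP a b N := by
    rw [Finset.sum_range_succ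
      (fun j => Polynomial.C ((((a + (j+1)).choose (b + (j+1)) * N.choose (j+1) : ℕ)) : ℝ) * Polynomial.X ^ (j+1)) N]
    rw [JP, Finset.sum_range_succ'
      (fun j => Polynomial.C ((((a + j).choose (b + j) * N.choose j : ℕ)) : ℝ) * Polynomial.X ^ j) N]
    simp [Nat.choose_succ_self]
  have hsplit : ∀ j, (Polynomial.C ((((a + (j+1)).choose (b + (j+1)) * (N+1).choose (j+1) : ℕ)) : ℝ) * Polynomial.X ^ (j+1))
      = Polynomial.X * (Polynomial.C ((((a + 1 + j).choose (b + 1 + j) * N.choose j : ℕ)) : ℝ) * Polynomial.X ^ j)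
        + Polynomial.C ((((a + (j+1)).choose (b + (j+1)) * N.choose (j+1) : ℕ)) : ℝ) * Polynomial.X ^ (j+1) := by
    intro j
    rw [Nat.choose_succ_succ N j, show a + (j+1) = a + 1 + j by omega, show b + (j+1) = b + 1 + j by omega]
    simp only [Nat.succ_eq_add_one, Nat.cast_mul, Nat.cast_add, map_add, map_mul]
    ring
  calc JP a b (N + 1)
      = (∑ j ∈ Finset.range (N + 1),
          Polynomial.C ((((a + (j+1)).choose (b + (j+1)) * (N+1).choose (j+1) : ℕ)) : ℝ) * Polynomial.X ^ (j+1))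
        + Polynomial.C ((((a + 0).choose (b + 0) * (N+1).choose 0 : ℕ)) : ℝ) * Polynomial.X ^ 0 := by
        rw [JP, Finset.sum_range_succ'
          (fun j => Polynomial.C ((((a + j).choose (b + j) * (N+1).choose j : ℕ)) : ℝ) * Polynomial.X ^ j) (N+1)]
    _ = JP a b N + Polynomial.X * JP (a + 1) (b + 1) N := by
        rw [Finset.sum_congr rfl fun j _ => hsplit j, Finset.sum_add_distrib]
        rw [h1, add_assoc, h2, add_comm]

lemma FGbase (ℓ m : ℕ) :
    KP 0 ℓ (ℓ + m) = Polynomial.X ^ ℓ * (1 + Polynomial.X) ^ m * JP (ℓ + m) ℓ 0 := by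
  have hJ : JP (ℓ + m) ℓ 0 = Polynomial.C ((((ℓ+m).choose ℓ : ℕ)) : ℝ) := by
    simp [JP]
  have hpow : ((1 : Polynomial ℝ) + Polynomial.X) ^ m
      = ∑ s ∈ Finset.range (m + 1), Polynomial.C (((m.choose s : ℕ)) : ℝ) * Polynomial.X ^ s := by
    rw [add_comm, add_pow]
    refine Finset.sum_congr rfl fun s _ => ?_
    simp only [one_pow, mul_one, Polynomial.C_eq_natCast]
    ring
  rw [hJ, hpow, Finset.mul_sum, Finset.sum_mul]
  rw [KP, show ℓ + m + 1 = ℓ + (m + 1) by omega, Finset.sum_range_add]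
  have hz : (∑ k ∈ Finset.range ℓ,
      Polynomial.C ((((0 + k).choose ℓ * (ℓ+m).choose k : ℕ)) : ℝ) * Polynomial.X ^ k) = 0 := by
    refine Finset.sum_eq_zero fun k hk => ?_
    rw [Nat.zero_add, Nat.choose_eq_zero_of_lt (Finset.mem_range.1 hk)]
    simp
  rw [hz, zero_add]
  refine Finset.sum_congr rfl fun s hs => ?_
  have hs' : s ≤ m := by have := Finset.mem_range.1 hs; omega
  have hmul : (0 + (ℓ + s)).choose ℓ * (ℓ+m).choose (ℓ+s) = m.choose s * (ℓ+m).choose ℓ := by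
    have h := Nat.choose_mul (n := ℓ + m) (k := ℓ + s) (s := ℓ) (by omega)
    rw [show ℓ + m - ℓ = m by omega, show ℓ + s - ℓ = s by omega] at h
    rw [Nat.zero_add, Nat.mul_comm]
    rw [Nat.mul_comm ((ℓ+m).choose ℓ) (m.choose s)] at h
    exact h
  rw [hmul]
  simp only [Nat.cast_mul, map_mul, pow_add]
  ring

lemma FG (N : ℕ) : ∀ ℓ m : ℕ,
    KP N (N + ℓ) (N + ℓ + m)
      = Polynomial.X ^ ℓ * (1 + Polynomial.X) ^ m * JP (N + ℓ + m) ℓ N := by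
  induction N with
  | zero =>
    intro ℓ m
    simpa using FGbase ℓ m
  | succ N ih =>
    intro ℓ m
    have h10 : (1 + Polynomial.X : Polynomial ℝ) ≠ 0 := fun h =>
      one_ne_zero (α := ℝ) (by simpa using congrArg (Polynomial.eval 0) h)
    apply mul_left_cancel₀ h10
    have ih1 := ih ℓ (m + 1)
    have ih2 := ih (ℓ + 1) (m + 1)
    simp only [show N + ℓ + (m + 1) = N + ℓ + m + 1 from by omega] at ih1
    simp only [show N + (ℓ + 1) = N + ℓ + 1 from by omega,
      show N + ℓ + 1 + (m + 1) = N + ℓ + m + 2 from by omega] at ih2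
    rw [show N + 1 + ℓ + m = (N + ℓ + m) + 1 from by omega,
        show N + 1 + ℓ = (N + ℓ) + 1 from by omega,
        Krec N (N + ℓ) (N + ℓ + m), ih1, ih2,
        JA (N + ℓ + m + 1) ℓ N]
    ring

lemma keyEval (ℓ m N : ℕ) (x : ℝ) :
    (∑ k ∈ Finset.range (N + ℓ + m + 1),
        (((N + k).choose (N + ℓ) * (N + ℓ + m).choose k : ℕ) : ℝ) * x ^ k)
      = x ^ ℓ * (1 + x) ^ m *
        ∑ j ∈ Finset.range (N + 1),
          (((N + ℓ + m + j).choose (ℓ + j) * N.choose j : ℕ) : ℝ) * x ^ j := by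
  have h := congrArg (Polynomial.eval x) (FG N ℓ m)
  simpa [KP, JP, Polynomial.eval_finset_sum] using h

theorem stmt4 (ℓ m n : ℕ) (h : m + ℓ ≤ n) (t : ℝ) :
    J (-(ℓ : ℝ)) (-(m : ℝ)) n t =
      (-1) ^ ℓ * ((n - m - ℓ).factorial : ℝ) / (2 ^ (ℓ + m) * (n.factorial : ℝ)) *
        (1 - t) ^ ℓ * (1 + t) ^ m * J (ℓ : ℝ) (m : ℝ) (n - ℓ - m) t := by
  obtain ⟨N, rfl⟩ : ∃ N, n = N + ℓ + m := ⟨n - ℓ - m, by omega⟩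
  rw [show N + ℓ + m - ℓ - m = N from by omega, show N + ℓ + m - m - ℓ = N from by omega]
  have ffac : ∀ q : ℕ, ((q.factorial : ℝ)) ≠ 0 := fun q => by
    exact_mod_cast q.factorial_ne_zero
  have hL : J (-(ℓ : ℝ)) (-(m : ℝ)) (N + ℓ + m) t
      = (((N+m).factorial * (N+ℓ).factorial : ℝ) /
          (((N+ℓ+m).factorial : ℝ) * ((2*N+ℓ+m).factorial : ℝ)))
        * ∑ k ∈ Finset.range (N + ℓ + m + 1),
            (((N + k).choose (N + ℓ) * (N + ℓ + m).choose k : ℕ) : ℝ) * ((t - 1) / 2) ^ k := by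
    rw [J, Finset.mul_sum]
    refine Finset.sum_congr rfl fun k hk => ?_
    have hk' : k ≤ N + ℓ + m := by have := Finset.mem_range.1 hk; omega
    by_cases hkl : k < ℓ
    · have h0 : poch ((k : ℝ) + -(ℓ : ℝ) + 1) (N + ℓ + m - k) = 0 := by
        refine poch_eq_zero (j := ℓ - 1 - k) (by omega) ?_
        have : ((ℓ - 1 - k : ℕ) : ℝ) = (ℓ : ℝ) - 1 - k := by
          push_cast [Nat.cast_sub (by omega : k ≤ ℓ - 1), Nat.cast_sub (by omega : 1 ≤ ℓ)]
          ring
        rw [this]; ring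
      have h1 : (N + k).choose (N + ℓ) = 0 := Nat.choose_eq_zero_of_lt (by omega)
      rw [h0, h1]
      simp
    · obtain ⟨u, rfl⟩ : ∃ u, k = ℓ + u := ⟨k - ℓ, by omega⟩
      obtain ⟨v, hv⟩ : ∃ v, N + m = u + v := ⟨N + m - u, by omega⟩
      have hnk : N + ℓ + m - (ℓ + u) = v := by omega
      have e1 : ((ℓ + u : ℕ) : ℝ) + -(ℓ : ℝ) + 1 = (u : ℝ) + 1 := by push_cast; ring
      have e2 : ((N + ℓ + m : ℕ) : ℝ) + -(ℓ : ℝ) + -(m : ℝ) + ((ℓ + u : ℕ) : ℝ) + 1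
          = ((N + ℓ + u : ℕ) : ℝ) + 1 := by push_cast; ring
      rw [hnk, e1, e2, poch_eq u v, poch_eq (N + ℓ + u) v]
      have c1 : (((N + (ℓ + u)).choose (N + ℓ) : ℕ) : ℝ)
          = ((N+ℓ+u).factorial : ℝ) / (((N+ℓ).factorial : ℝ) * (u.factorial : ℝ)) := by
        rw [show N + (ℓ + u) = N + ℓ + u from by omega, Nat.cast_choose ℝ (by omega)]
        rw [show N + ℓ + u - (N + ℓ) = u from by omega]
      have c2 : (((N + ℓ + m).choose (ℓ + u) : ℕ) : ℝ)
          = ((N+ℓ+m).factorial : ℝ) / (((ℓ+u).factorial : ℝ) * (v.factorial : ℝ)) := by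
        rw [Nat.cast_choose ℝ (by omega), show N + ℓ + m - (ℓ + u) = v from by omega]
      rw [show u + v = N + m from by omega, show N + ℓ + u + v = 2*N+ℓ+m from by omega]
      rw [Nat.cast_mul, c1, c2]
      field_simp
  have hR : J (ℓ : ℝ) (m : ℝ) N t
      = (((N+ℓ).factorial * (N+m).factorial : ℝ) /
          (((2*N+ℓ+m).factorial : ℝ) * (N.factorial : ℝ)))
        * ∑ j ∈ Finset.range (N + 1),
            (((N + ℓ + m + j).choose (ℓ + j) * N.choose j : ℕ) : ℝ) * ((t - 1) / 2) ^ j := by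
    rw [J, Finset.mul_sum]
    refine Finset.sum_congr rfl fun j hj => ?_
    have hj' : j ≤ N := by have := Finset.mem_range.1 hj; omega
    obtain ⟨w, rfl⟩ : ∃ w, N = j + w := ⟨N - j, by omega⟩
    have hnj : j + w - j = w := by omega
    have e1 : ((j : ℕ) : ℝ) + (ℓ : ℝ) + 1 = ((ℓ + j : ℕ) : ℝ) + 1 := by push_cast; ring
    have e2 : ((j + w : ℕ) : ℝ) + (ℓ : ℝ) + (m : ℝ) + ((j : ℕ) : ℝ) + 1
        = (((j + w) + ℓ + m + j : ℕ) : ℝ) + 1 := by push_cast; ring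
    rw [hnj, e1, e2, poch_eq (ℓ + j) w, poch_eq ((j + w) + ℓ + m + j) w]
    have c1 : ((((j + w) + ℓ + m + j).choose (ℓ + j) : ℕ) : ℝ)
        = (((j+w)+ℓ+m+j).factorial : ℝ) / (((ℓ+j).factorial : ℝ) * (((j+w)+m).factorial : ℝ)) := by
      rw [Nat.cast_choose ℝ (by omega), show (j+w) + ℓ + m + j - (ℓ + j) = (j+w)+m from by omega]
    have c2 : (((j + w).choose j : ℕ) : ℝ)
        = (((j+w)).factorial : ℝ) / ((j.factorial : ℝ) * (w.factorial : ℝ)) := by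
      rw [Nat.cast_choose ℝ (by omega), show j + w - j = w from by omega]
    rw [show ℓ + j + w = (j + w) + ℓ from by omega,
        show (j + w) + ℓ + m + j + w = 2*(j+w)+ℓ+m from by omega]
    rw [Nat.cast_mul, c1, c2]
    field_simp
  rw [hL, hR, keyEval ℓ m N ((t - 1) / 2)]
  have h1t : (1 - t) = -2 * ((t - 1) / 2) := by ring
  have h2t : (1 + t) = 2 * (1 + (t - 1) / 2) := by ring
  rw [h1t, h2t, mul_pow, mul_pow]
  rcases Nat.even_or_odd ℓ with he | ho
  · rw [he.neg_pow, he.neg_pow, one_pow]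
    field_simp
    ring
  · rw [ho.neg_pow, ho.neg_pow]
    field_simp
    ring
end

section
/- For α,β,γ ∈ ℝ and 0 ≤ k ≤ n, the Jacobi polynomials on the triangle satisfy (∂_y − ∂_x) J_{k,n}^{α,β,γ}(x,y) = J_{k-1,n-1}^{α+1,β+1,γ}(x,y), with the convention J_{k,n} = 0 for k < 0. -/
open Finset MeasureTheory

/-- Jacobi polynomial on the triangle with integer indices and the convention
`J_{k,n} = 0` for `k < 0` or `k > n`. -/
noncomputable def JTz (α β γ : ℝ) (k n : ℤ) (x y : ℝ) : ℝ :=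
  if 0 ≤ k ∧ k ≤ n then
    (x + y) ^ k.toNat * J α β k.toNat ((y - x) / (x + y)) *
      J (2 * (k : ℝ) + α + β + 1) γ (n - k).toNat (1 - 2 * x - 2 * y)
  else 0

lemma J_zero (α β : ℝ) (t : ℝ) : J α β 0 t = 1 := by
  simp [J, poch]

lemma coeff_eq (α β : ℝ) (n j : ℕ) :
    poch ((j:ℝ) + 1 + α + 1) (n - j) /
      (((n-j).factorial : ℝ) * ((j+1).factorial : ℝ) *
        poch ((n:ℝ) + 1 + α + β + ((j:ℝ)+1) + 1) (n-j)) * ((j:ℝ)+1)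
    = poch ((j:ℝ) + (α+1) + 1) (n - j) /
      (((n-j).factorial : ℝ) * (j.factorial : ℝ) *
        poch ((n:ℝ) + (α+1) + (β+1) + (j:ℝ) + 1) (n-j)) := by
  have h1 : (j:ℝ) + 1 + α + 1 = (j:ℝ) + (α+1) + 1 := by ring
  have h2 : (n:ℝ) + 1 + α + β + ((j:ℝ)+1) + 1 = (n:ℝ) + (α+1) + (β+1) + (j:ℝ) + 1 := by
    ring
  rw [h1, h2, Nat.factorial_succ]
  have hj : ((j:ℝ)+1) ≠ 0 := by positivity
  push_cast
  rw [show ((n-j).factorial : ℝ) * (((j:ℝ)+1) * (j.factorial:ℝ)) *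
      poch ((n:ℝ) + (α+1) + (β+1) + (j:ℝ) + 1) (n-j)
    = ((n-j).factorial : ℝ) * (j.factorial:ℝ) *
      poch ((n:ℝ) + (α+1) + (β+1) + (j:ℝ) + 1) (n-j) * ((j:ℝ)+1) from by ring]
  rw [div_mul_eq_mul_div, mul_div_mul_right _ _ hj]

lemma hasDerivAt_J (α β : ℝ) (n : ℕ) (t : ℝ) :
    HasDerivAt (J α β (n+1)) ((1/2) * J (α+1) (β+1) n t) t := by
  have key : ∀ (c : ℝ) (k : ℕ), HasDerivAt (fun t : ℝ => c * ((t - 1)/2)^k)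
      (c * ((k:ℝ) * ((t-1)/2)^(k-1) * (1/2))) t := by
    intro c k
    exact (((hasDerivAt_id t).sub_const 1).div_const 2).pow k |>.const_mul c
  have hsum : HasDerivAt (J α β (n+1))
      (∑ k ∈ Finset.range (n+2),
        (poch ((k : ℝ) + α + 1) ((n+1) - k) /
          ((((n+1) - k).factorial : ℝ) * (k.factorial : ℝ) *
            poch ((↑(n+1) : ℝ) + α + β + (k : ℝ) + 1) ((n+1) - k))) *
          ((k:ℝ) * ((t-1)/2)^(k-1) * (1/2))) t :=
    HasDerivAt.fun_sum (fun k _ => key _ k)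
  convert hsum using 1
  rw [Finset.sum_range_succ']
  simp only [Nat.cast_zero, zero_mul, mul_zero, add_zero]
  rw [J, Finset.mul_sum]
  refine Finset.sum_congr rfl fun j hj => ?_
  rw [show (j + 1) - 1 = j from rfl]
  push_cast
  have hc := coeff_eq α β n j
  linear_combination (-(((t-1)/2)^j)/2) * hc

/-- Derivative value of `J α β n`, with the convention that it is `0` for `n = 0`. -/
noncomputable def JD (α β : ℝ) (n : ℕ) (t : ℝ) : ℝ :=
  if n = 0 then 0 else (1/2) * J (α+1) (β+1) (n-1) t

lemma hasDerivAt_J_all (α β : ℝ) (n : ℕ) (t : ℝ) :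
    HasDerivAt (J α β n) (JD α β n t) t := by
  cases n with
  | zero =>
      have h : J α β 0 = fun _ : ℝ => (1:ℝ) := funext (J_zero α β)
      rw [JD, if_pos rfl, h]
      exact hasDerivAt_const t 1
  | succ m =>
      rw [JD, if_neg (Nat.succ_ne_zero m)]
      exact hasDerivAt_J α β m t

theorem stmt14 (α β γ : ℝ) (k n : ℤ) (hk : 0 ≤ k) (hkn : k ≤ n)
    (x y : ℝ) (hxy : x + y ≠ 0) :
    deriv (fun y' => JTz α β γ k n x y') y - deriv (fun x' => JTz α β γ k n x' y) x =
      JTz (α + 1) (β + 1) γ (k - 1) (n - 1) x y := by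
  set m := k.toNat with hmdef
  set p := (n - k).toNat with hpdef
  set A : ℝ := 2 * (k : ℝ) + α + β + 1 with hAdef
  set u : ℝ := (y - x) / (x + y) with hudef
  set v : ℝ := 1 - 2 * x - 2 * y with hvdef
  have hJT : ∀ x' y' : ℝ, JTz α β γ k n x' y' =
      (x' + y') ^ m * J α β m ((y' - x') / (x' + y')) * J A γ p (1 - 2 * x' - 2 * y') := by
    intro x' y'
    rw [JTz, if_pos ⟨hk, hkn⟩]
  -- derivative in y
  have hay : HasDerivAt (fun y' : ℝ => (x + y') ^ m) ((m:ℝ) * (x + y) ^ (m - 1) * 1) y :=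
    ((hasDerivAt_id y).const_add x).pow m
  have huy : HasDerivAt (fun y' : ℝ => (y' - x) / (x + y'))
      ((1 * (x + y) - (y - x) * 1) / (x + y) ^ 2) y :=
    ((hasDerivAt_id y).sub_const x).div ((hasDerivAt_id y).const_add x) hxy
  have hJuy : HasDerivAt (fun y' : ℝ => J α β m ((y' - x) / (x + y')))
      (JD α β m u * ((1 * (x + y) - (y - x) * 1) / (x + y) ^ 2)) y :=
    by have := (hasDerivAt_J_all α β m u).comp y huy; exact this
  have hvy : HasDerivAt (fun y' : ℝ => 1 - 2 * x - 2 * y') (-2) y := by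
    have := (hasDerivAt_const y (1 - 2 * x)).fun_sub ((hasDerivAt_id y).const_mul 2)
    simpa using this
  have hJvy : HasDerivAt (fun y' : ℝ => J A γ p (1 - 2 * x - 2 * y'))
      (JD A γ p v * (-2)) y :=
    by have := (hasDerivAt_J_all A γ p v).comp y hvy; exact this
  have Hy : HasDerivAt (fun y' => JTz α β γ k n x y')
      (((m:ℝ) * (x + y) ^ (m - 1) * 1 * J α β m u +
          (x + y) ^ m * (JD α β m u * ((1 * (x + y) - (y - x) * 1) / (x + y) ^ 2))) *
            J A γ p v +
        (x + y) ^ m * J α β m u * (JD A γ p v * (-2))) y := by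
    have heq : (fun y' => JTz α β γ k n x y') =
        fun y' => (x + y') ^ m * J α β m ((y' - x) / (x + y')) *
          J A γ p (1 - 2 * x - 2 * y') := funext (hJT x)
    rw [heq]
    exact (hay.mul hJuy).mul hJvy
  -- derivative in x
  have hax : HasDerivAt (fun x' : ℝ => (x' + y) ^ m) ((m:ℝ) * (x + y) ^ (m - 1) * 1) x :=
    ((hasDerivAt_id x).add_const y).pow m
  have hux : HasDerivAt (fun x' : ℝ => (y - x') / (x' + y))
      ((-1 * (x + y) - (y - x) * 1) / (x + y) ^ 2) x := by
    have := ((hasDerivAt_id x).const_sub y).fun_div ((hasDerivAt_id x).add_const y) hxy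
    simpa using this
  have hJux : HasDerivAt (fun x' : ℝ => J α β m ((y - x') / (x' + y)))
      (JD α β m u * ((-1 * (x + y) - (y - x) * 1) / (x + y) ^ 2)) x :=
    by have := (hasDerivAt_J_all α β m u).comp x hux; exact this
  have hvx : HasDerivAt (fun x' : ℝ => 1 - 2 * x' - 2 * y) (-2) x := by
    have := (((hasDerivAt_const x (1:ℝ)).fun_sub ((hasDerivAt_id x).const_mul 2)).sub_const (2 * y))
    simpa using this
  have hJvx : HasDerivAt (fun x' : ℝ => J A γ p (1 - 2 * x' - 2 * y))
      (JD A γ p v * (-2)) x :=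
    by have := (hasDerivAt_J_all A γ p v).comp x hvx; exact this
  have Hx : HasDerivAt (fun x' => JTz α β γ k n x' y)
      (((m:ℝ) * (x + y) ^ (m - 1) * 1 * J α β m u +
          (x + y) ^ m * (JD α β m u * ((-1 * (x + y) - (y - x) * 1) / (x + y) ^ 2))) *
            J A γ p v +
        (x + y) ^ m * J α β m u * (JD A γ p v * (-2))) x := by
    have heq : (fun x' => JTz α β γ k n x' y) =
        fun x' => (x' + y) ^ m * J α β m ((y - x') / (x' + y)) *
          J A γ p (1 - 2 * x' - 2 * y) := funext fun x' => hJT x' y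
    rw [heq]
    exact (hax.mul hJux).mul hJvx
  rw [Hy.deriv, Hx.deriv]
  by_cases hk0 : k = 0
  · -- k = 0 : both sides vanish
    have hm0 : m = 0 := by simp [hmdef, hk0]
    have hJD0 : JD α β m u = 0 := by rw [hm0, JD, if_pos rfl]
    rw [JTz, if_neg (by omega)]
    rw [hJD0]
    ring
  · -- k ≥ 1
    have hm1 : 1 ≤ m := by omega
    have hJDm : JD α β m u = (1/2) * J (α+1) (β+1) (m-1) u := by
      rw [JD, if_neg (by omega)]
    rw [JTz, if_pos ⟨by omega, by omega⟩]
    have h1 : (k - 1).toNat = m - 1 := by omega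
    have h2 : (n - 1 - (k - 1)).toNat = p := by omega
    have h3 : 2 * ((k:ℝ) - 1) + (α + 1) + (β + 1) + 1 = A := by rw [hAdef]; ring
    rw [h1, h2]
    push_cast
    rw [h3, hJDm]
    rw [show (x + y) ^ m = (x + y) ^ (m - 1) * (x + y) from by
      rw [← pow_succ]; congr 1; omega]
    rw [← hudef, ← hvdef]
    field_simp
    ring
end
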